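/- Let α, β ≥ 0 with α + β ≥ 2, and let a, b : ℤ² → ℂ be such that k ↦ (1 + ‖k‖²)^{β/2}|a(k)|² and k ↦ (1 + ‖k‖²)^{α/2}|b(k)|² are summable over ℤ². Then k ↦ |k₁|·|a(k)|·|b(k)| is summable and ∑_{k∈ℤ²} |k₁|·|a(k)|·|b(k)| ≤ (∑_{k∈ℤ²} (1 + ‖k‖²)^{β/2}|a(k)|²)^{1/2} · (∑_{k∈ℤ²} (1 + ‖k‖²)^{α/2}|b(k)|²)^{1/2}. -/

import Mathlib

/-- Fourier-coefficient form of the duality estimate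
`∫ ∂₁θ · ω ≤ ‖θ‖_{H^{β/2}} ‖ω‖_{H^{α/2}}` valid when `α/2 + β/2 ≥ 1`
(estimate (38) in the paper). -/
theorem duality_estimate_fourier (α β : ℝ) (hα : 0 ≤ α) (hβ : 0 ≤ β)
    (hαβ : 2 ≤ α + β) (a b : ℤ × ℤ → ℂ)
    (ha : Summable (fun k : ℤ × ℤ =>
      (1 + ((k.1 : ℝ) ^ 2 + (k.2 : ℝ) ^ 2)) ^ (β / 2) * ‖a k‖ ^ 2))
    (hb : Summable (fun k : ℤ × ℤ =>
      (1 + ((k.1 : ℝ) ^ 2 + (k.2 : ℝ) ^ 2)) ^ (α / 2) * ‖b k‖ ^ 2)) :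
    Summable (fun k : ℤ × ℤ =>
      |(k.1 : ℝ)| * ‖a k‖ * ‖b k‖) ∧
    (∑' k : ℤ × ℤ, |(k.1 : ℝ)| * ‖a k‖ * ‖b k‖) ≤
      (∑' k : ℤ × ℤ,
          (1 + ((k.1 : ℝ) ^ 2 + (k.2 : ℝ) ^ 2)) ^ (β / 2) * ‖a k‖ ^ 2)
            ^ ((1 : ℝ) / 2) *
      (∑' k : ℤ × ℤ,
          (1 + ((k.1 : ℝ) ^ 2 + (k.2 : ℝ) ^ 2)) ^ (α / 2) * ‖b k‖ ^ 2)
            ^ ((1 : ℝ) / 2) := by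
  set A : ℤ × ℤ → ℝ := fun k =>
    (1 + ((k.1 : ℝ) ^ 2 + (k.2 : ℝ) ^ 2)) ^ (β / 2) * ‖a k‖ ^ 2 with hA
  set B : ℤ × ℤ → ℝ := fun k =>
    (1 + ((k.1 : ℝ) ^ 2 + (k.2 : ℝ) ^ 2)) ^ (α / 2) * ‖b k‖ ^ 2 with hB
  set F : ℤ × ℤ → ℝ := fun k =>
    (1 + ((k.1 : ℝ) ^ 2 + (k.2 : ℝ) ^ 2)) ^ (β / 4) * ‖a k‖ with hF
  set G : ℤ × ℤ → ℝ := fun k =>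
    (1 + ((k.1 : ℝ) ^ 2 + (k.2 : ℝ) ^ 2)) ^ (α / 4) * ‖b k‖ with hG
  have hx : ∀ k : ℤ × ℤ, (1 : ℝ) ≤ 1 + ((k.1 : ℝ) ^ 2 + (k.2 : ℝ) ^ 2) := by
    intro k
    nlinarith [sq_nonneg ((k.1 : ℝ)), sq_nonneg ((k.2 : ℝ))]
  have hxpos : ∀ k : ℤ × ℤ, (0 : ℝ) < 1 + ((k.1 : ℝ) ^ 2 + (k.2 : ℝ) ^ 2) :=
    fun k => lt_of_lt_of_le one_pos (hx k)
  have hFnn : ∀ k, 0 ≤ F k := fun k => by positivity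
  have hGnn : ∀ k, 0 ≤ G k := fun k => by positivity
  have hF2 : ∀ k, F k ^ 2 = A k := by
    intro k
    show ((1 + ((k.1 : ℝ) ^ 2 + (k.2 : ℝ) ^ 2)) ^ (β / 4) * ‖a k‖) ^ 2 = _
    rw [mul_pow, ← Real.rpow_natCast ((1 + ((k.1 : ℝ) ^ 2 + (k.2 : ℝ) ^ 2)) ^ (β / 4)) 2,
      ← Real.rpow_mul (hxpos k).le]
    have h24 : β / 4 * ((2:ℕ):ℝ) = β / 2 := by push_cast; ring
    rw [h24]
  have hG2 : ∀ k, G k ^ 2 = B k := by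
    intro k
    show ((1 + ((k.1 : ℝ) ^ 2 + (k.2 : ℝ) ^ 2)) ^ (α / 4) * ‖b k‖) ^ 2 = _
    rw [mul_pow, ← Real.rpow_natCast ((1 + ((k.1 : ℝ) ^ 2 + (k.2 : ℝ) ^ 2)) ^ (α / 4)) 2,
      ← Real.rpow_mul (hxpos k).le]
    have h24 : α / 4 * ((2:ℕ):ℝ) = α / 2 := by push_cast; ring
    rw [h24]
  -- pointwise bound
  have hpt : ∀ k : ℤ × ℤ, |(k.1 : ℝ)| * ‖a k‖ * ‖b k‖ ≤ F k * G k := by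
    intro k
    have h1 : |(k.1 : ℝ)| ≤ (1 + ((k.1 : ℝ) ^ 2 + (k.2 : ℝ) ^ 2)) ^ ((1 : ℝ) / 2) := by
      rw [← Real.sqrt_eq_rpow]
      have : |(k.1 : ℝ)| = Real.sqrt ((k.1 : ℝ) ^ 2) := by
        rw [Real.sqrt_sq_eq_abs]
      rw [this]
      apply Real.sqrt_le_sqrt
      nlinarith [sq_nonneg ((k.2 : ℝ))]
    have h2 : (1 + ((k.1 : ℝ) ^ 2 + (k.2 : ℝ) ^ 2)) ^ ((1 : ℝ) / 2) ≤
        (1 + ((k.1 : ℝ) ^ 2 + (k.2 : ℝ) ^ 2)) ^ (β / 4 + α / 4) := by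
      apply Real.rpow_le_rpow_of_exponent_le (hx k)
      linarith
    have h3 : |(k.1 : ℝ)| ≤
        (1 + ((k.1 : ℝ) ^ 2 + (k.2 : ℝ) ^ 2)) ^ (β / 4) *
        (1 + ((k.1 : ℝ) ^ 2 + (k.2 : ℝ) ^ 2)) ^ (α / 4) := by
      rw [← Real.rpow_add (hxpos k)]
      exact h1.trans h2
    calc |(k.1 : ℝ)| * ‖a k‖ * ‖b k‖
        ≤ ((1 + ((k.1 : ℝ) ^ 2 + (k.2 : ℝ) ^ 2)) ^ (β / 4) *
          (1 + ((k.1 : ℝ) ^ 2 + (k.2 : ℝ) ^ 2)) ^ (α / 4)) *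
          ‖a k‖ * ‖b k‖ := by
          apply mul_le_mul_of_nonneg_right
          apply mul_le_mul_of_nonneg_right h3 (norm_nonneg _)
          exact norm_nonneg _
      _ = F k * G k := by simp only [hF, hG]; ring
  -- summability of F * G
  have hFG : Summable (fun k => F k * G k) := by
    apply Summable.of_nonneg_of_le (fun k => mul_nonneg (hFnn k) (hGnn k))
      (fun k => ?_) (((ha.add hb).div_const 2))
    have h1 := hF2 k
    have h2 := hG2 k
    show F k * G k ≤ (A k + B k) / 2
    nlinarith [sq_nonneg (F k - G k)]
  have hsum : Summable (fun k : ℤ × ℤ =>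
      |(k.1 : ℝ)| * ‖a k‖ * ‖b k‖) := by
    apply Summable.of_nonneg_of_le (fun k => by positivity) hpt hFG
  refine ⟨hsum, ?_⟩
  have hAnn : ∀ k, 0 ≤ A k := fun k => (hF2 k) ▸ sq_nonneg _
  have hBnn : ∀ k, 0 ≤ B k := fun k => (hG2 k) ▸ sq_nonneg _
  rw [← Real.sqrt_eq_rpow, ← Real.sqrt_eq_rpow]
  have key : (∑' k, F k * G k) ≤ Real.sqrt (∑' k, A k) * Real.sqrt (∑' k, B k) := by
    apply Summable.tsum_le_of_sum_le hFG
    intro s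
    calc ∑ k ∈ s, F k * G k
        ≤ Real.sqrt (∑ k ∈ s, F k ^ 2) * Real.sqrt (∑ k ∈ s, G k ^ 2) :=
          Real.sum_mul_le_sqrt_mul_sqrt s F G
      _ ≤ Real.sqrt (∑' k, A k) * Real.sqrt (∑' k, B k) := by
          apply mul_le_mul
          · apply Real.sqrt_le_sqrt
            simp only [hF2]
            exact Summable.sum_le_tsum s (fun k _ => hAnn k) ha
          · apply Real.sqrt_le_sqrt
            simp only [hG2]
            exact Summable.sum_le_tsum s (fun k _ => hBnn k) hb
          · exact Real.sqrt_nonneg _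
          · exact Real.sqrt_nonneg _
  exact le_trans (Summable.tsum_le_tsum hpt hsum hFG) key
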